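/- Let n, k₁, k₂, k₃ be nonnegative integers with k₁ + k₂ + k₃ ≤ n, and set r = n − (k₁ + k₂ + k₃). Then the number of additive subgroups of (ZMod 8)^n that are isomorphic as abelian groups to (ZMod 8)^{k₁} × (ZMod 4)^{k₂} × (ZMod 2)^{k₃}, multiplied by 2^r, equals N(1,n;1,k₁,k₂,k₃). -/
import Mathlib


open Finset

/-- The Mixed Generalized Gaussian Number `N(α,β;k₀,k₁,k₂,k₃)`. -/
def MGN (a b k₀ k₁ k₂ k₃ : ℕ) : ℚ :=
  ((∏ i ∈ range k₀, ((2 ^ a - 2 ^ i : ℚ) * 2 ^ b)) *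
   (∏ i ∈ range k₁, ((8 ^ b - 4 ^ b * 2 ^ i : ℚ) * 2 ^ a)) *
   (∏ i ∈ range k₂, ((4 ^ b - 2 ^ (b + k₁ + i) : ℚ) * 2 ^ a)) *
   (∏ i ∈ range k₃, (2 ^ b - 2 ^ (k₁ + k₂ + i) : ℚ))) /
  ((∏ i ∈ range k₀, (2 ^ (k₀ + k₁ + k₂ + k₃) - 2 ^ (k₁ + k₂ + k₃ + i) : ℚ)) *
   (∏ i ∈ range k₁, ((8 ^ k₁ - 4 ^ k₁ * 2 ^ i : ℚ) * 2 ^ (k₀ + 2 * k₂ + k₃))) *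
   (∏ i ∈ range k₂, ((4 ^ k₂ - 2 ^ (k₂ + i) : ℚ) * 2 ^ (k₀ + 2 * k₁ + k₃))) *
   (∏ i ∈ range k₃, (2 ^ (k₁ + k₂ + k₃) - 2 ^ (k₁ + k₂ + i) : ℚ)))


open Function

section Helpers

lemma natCard_sigma_const {ι : Type*} [Finite ι] (f : ι → Type*) [∀ i, Finite (f i)]
    (c : ℕ) (h : ∀ i, Nat.card (f i) = c) :
    Nat.card ((i : ι) × f i) = Nat.card ι * c := by
  classical
  cases nonempty_fintype ι
  letI : ∀ i, Fintype (f i) := fun i => Fintype.ofFinite _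
  have h' : ∀ i, Fintype.card (f i) = c := fun i => by rw [← Nat.card_eq_fintype_card, h]
  simp [Nat.card_eq_fintype_card, Fintype.card_sigma, h', mul_comm]

lemma natCard_compl {α : Type*} [Finite α] (p : α → Prop) :
    Nat.card {x // ¬ p x} = Nat.card α - Nat.card {x // p x} := by
  classical
  cases nonempty_fintype α
  simp [Nat.card_eq_fintype_card, Fintype.card_subtype_compl]

/-- homs out of `ZMod m` correspond to `m`-torsion points. -/
noncomputable def zmodHomEquiv (m : ℕ) (A : Type*) [AddCommGroup A] :
    (ZMod m →+ A) ≃ {x : A // m • x = 0} where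
  toFun g := ⟨g 1, by
    rw [← map_nsmul, nsmul_eq_mul, mul_one, ZMod.natCast_self, map_zero]⟩
  invFun x := ZMod.lift m ⟨zmultiplesHom A x.1, by
    simpa using (natCast_zsmul x.1 m).trans x.2⟩
  left_inv g := by
    ext1 t
    obtain ⟨z, rfl⟩ := ZMod.intCast_surjective t
    rw [ZMod.lift_coe]
    have : ((z : ℤ) : ZMod m) = z • (1 : ZMod m) := by
      rw [zsmul_eq_mul, mul_one]
    rw [this, map_zsmul]
    rfl
  right_inv x := by
    apply Subtype.ext
    have h1 : ((1 : ℤ) : ZMod m) = 1 := by simp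
    show (ZMod.lift m _) (1 : ZMod m) = x.1
    rw [← h1, ZMod.lift_coe]
    simp

lemma zmodHom_apply {m : ℕ} [NeZero m] {A : Type*} [AddCommGroup A] (g : ZMod m →+ A)
    (t : ZMod m) : g t = t.val • g 1 := by
  conv_lhs => rw [← ZMod.natCast_zmod_val t]
  rw [show ((t.val : ℕ) : ZMod m) = t.val • (1 : ZMod m) by rw [nsmul_eq_mul, mul_one],
    map_nsmul]

end Helpers
open Finset Function

section InjChar

variable {H K : Type*} [AddCommGroup H] [AddCommGroup K]

lemma injective_coprod_iff {m c : ℕ} (hm : m = 2 * c) (hc : c ≠ 0)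
    (hL : ∀ j, j < m → j ≠ 0 → ∃ w, (w * j) % m = c)
    (g : ZMod m →+ K) (f : H →+ K) :
    Injective ⇑(g.coprod f) ↔ Injective ⇑f ∧ c • g 1 ∉ Set.range ⇑f := by
  have hcm : c < m := by omega
  haveI : NeZero m := ⟨by omega⟩
  have hcast : ∀ a : ℕ, ((a : ZMod m)) = a • (1 : ZMod m) := by
    intro a; rw [nsmul_eq_mul, mul_one]
  have hm0 : m • g 1 = 0 := by
    rw [← map_nsmul, ← hcast, ZMod.natCast_self, map_zero]
  constructor
  · intro hF
    constructor
    · intro a b hab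
      have : (g.coprod f) (0, a) = (g.coprod f) (0, b) := by
        simp [AddMonoidHom.coprod_apply, hab]
      have := hF this
      exact (Prod.mk.injEq _ _ _ _ ▸ this).2
    · rintro ⟨h, hh⟩
      have h0 : (g.coprod f) ((c : ZMod m), -h) = 0 := by
        rw [AddMonoidHom.coprod_apply]
        show g ((c : ZMod m)) + f (-h) = 0
        rw [hcast c, map_nsmul, map_neg, hh, add_neg_cancel]
      have h1 : ((c : ZMod m), -h) = (0 : ZMod m × H) := by
        apply hF; simpa using h0
      have h2 : ((c : ZMod m)) = 0 := (Prod.mk.injEq _ _ _ _ ▸ h1).1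
      have h3 : m ∣ c := (ZMod.natCast_eq_zero_iff c m).mp h2
      have := Nat.le_of_dvd (Nat.pos_of_ne_zero hc) h3
      omega
  · rintro ⟨hf, hx⟩
    rw [injective_iff_map_eq_zero]
    rintro ⟨t, h⟩ ht
    rw [AddMonoidHom.coprod_apply] at ht
    by_cases h0 : t = 0
    · subst h0
      simp only [map_zero, zero_add] at ht
      have : h = 0 := (injective_iff_map_eq_zero f).mp hf h ht
      simp [this]
    · exfalso
      have hj : t.val ≠ 0 := fun hv => h0 (by rwa [ZMod.val_eq_zero] at hv)
      obtain ⟨w, hw⟩ := hL t.val (ZMod.val_lt t) hj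
      apply hx
      have hgt : g t = t.val • g 1 := by
        conv_lhs => rw [← ZMod.natCast_zmod_val t]
        rw [hcast, map_nsmul]
      have hz : (m * (w * t.val / m)) • g 1 = 0 := by
        rw [mul_nsmul, hm0, smul_zero]
      have key : c • g 1 = (w * t.val) • g 1 := by
        conv_rhs => rw [← Nat.div_add_mod (w * t.val) m]
        rw [add_nsmul, hz, zero_add, hw]
      refine ⟨w • (-h), ?_⟩
      have hfh : f h = - (t.val • g 1) := by
        rw [← hgt]; linear_combination (norm := abel) ht
      rw [map_nsmul, map_neg, hfh, neg_neg, ← mul_nsmul, mul_comm t.val w, key]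

end InjChar

lemma hL8 : ∀ j, j < 8 → j ≠ 0 → ∃ w, (w * j) % 8 = 4 := by
  have H : ∀ j, j < 8 → j ≠ 0 → (4*j)%8 = 4 ∨ (2*j)%8 = 4 ∨ (1*j)%8 = 4 := by decide
  intro j h1 h2
  rcases H j h1 h2 with h|h|h
  exacts [⟨4,h⟩, ⟨2,h⟩, ⟨1,h⟩]

lemma hL4 : ∀ j, j < 4 → j ≠ 0 → ∃ w, (w * j) % 4 = 2 := by
  have H : ∀ j, j < 4 → j ≠ 0 → (2*j)%4 = 2 ∨ (1*j)%4 = 2 := by decide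
  intro j h1 h2
  rcases H j h1 h2 with h|h
  exacts [⟨2,h⟩, ⟨1,h⟩]

lemma hL2 : ∀ j, j < 2 → j ≠ 0 → ∃ w, (w * j) % 2 = 1 := by
  have H : ∀ j, j < 2 → j ≠ 0 → (1*j)%2 = 1 := by decide
  intro j h1 h2
  exact ⟨1, H j h1 h2⟩

section Step

variable {H K : Type*} [AddCommGroup H] [AddCommGroup K]

/-- decomposition of homs out of a product -/
def homProdEquiv (M : Type*) [AddCommGroup M] :
    (M × H →+ K) ≃ (M →+ K) × (H →+ K) where
  toFun F := (F.comp (AddMonoidHom.inl _ _), F.comp (AddMonoidHom.inr _ _))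
  invFun p := p.1.coprod p.2
  left_inv F := by
    ext ⟨t, h⟩
    simp [AddMonoidHom.coprod_apply, ← map_add]
  right_inv p := by
    obtain ⟨g, f⟩ := p
    simp only [Prod.mk.injEq]
    constructor <;> ext x <;> simp [AddMonoidHom.coprod_apply]

/-- generic reshuffle of a subtype of a product into a sigma -/
def subtypeProdSigma {α β : Type*} (q : β → Prop) (r : β → α → Prop) :
    {p : α × β // q p.2 ∧ r p.2 p.1} ≃ Σ b : {b : β // q b}, {a : α // r b.1 a} where
  toFun x := ⟨⟨x.1.2, x.2.1⟩, ⟨x.1.1, x.2.2⟩⟩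
  invFun s := ⟨(s.2.1, s.1.1), s.1.2, s.2.2⟩
  left_inv x := rfl
  right_inv s := rfl

lemma translation_card {m c : ℕ} (hm : m = 2 * c) (y : K) (x₀ : K)
    (h0 : m • x₀ = 0) (hcx : c • x₀ = y) :
    Nat.card {x : {x : K // m • x = 0} // c • x.1 = y} = Nat.card {z : K // c • z = 0} := by
  apply Nat.card_congr
  refine ⟨fun x => ⟨x.1.1 - x₀, by rw [smul_sub, x.2, hcx, sub_self]⟩,
    fun z => ⟨⟨z.1 + x₀, ?_⟩, ?_⟩, fun x => by ext; simp, fun z => by ext; simp⟩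
  · rw [smul_add, h0, add_zero, hm, mul_comm, mul_nsmul, z.2, smul_zero]
  · show c • (z.1 + x₀) = y
    rw [smul_add, z.2, zero_add, hcx]

lemma count_torsion_in_range {m c t : ℕ} (hm : m = 2 * c) [Finite H] [Finite K]
    (f : H →+ K) (hf : Injective ⇑f)
    (hSP : ∀ h : H, 2 • h = 0 → ∃ h', m • h' = 0 ∧ h = c • h')
    (htor : Nat.card {h : H // 2 • h = 0} = t) :
    Nat.card {x : {x : K // m • x = 0} // c • x.1 ∉ Set.range ⇑f}
      = Nat.card {x : K // m • x = 0} - Nat.card {x : K // c • x = 0} * t := by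
  rw [natCard_compl (fun x : {x : K // m • x = 0} => c • x.1 ∈ Set.range ⇑f)]
  congr 1
  set B := {y : K // y ∈ Set.range ⇑f ∧ ∃ x : K, m • x = 0 ∧ c • x = y} with hB
  have hBcard : Nat.card B = t := by
    rw [← htor]
    apply Nat.card_congr
    symm
    apply Equiv.ofBijective (f := fun h : {h : H // 2 • h = 0} =>
      (⟨f h.1, ⟨h.1, rfl⟩, by
        obtain ⟨h', hm', hh'⟩ := hSP h.1 h.2
        exact ⟨f h', by rw [← map_nsmul, hm', map_zero], by rw [← map_nsmul, ← hh']⟩⟩ : B))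
    constructor
    · intro a b hab
      exact Subtype.ext (hf (congrArg Subtype.val hab))
    · rintro ⟨y, ⟨h, rfl⟩, ⟨x, hx1, hx2⟩⟩
      refine ⟨⟨h, ?_⟩, rfl⟩
      apply hf
      rw [map_nsmul, map_zero, ← hx2, ← mul_nsmul, mul_comm, ← hm, hx1]
  have hfib : Nat.card {x : {x : K // m • x = 0} // c • x.1 ∈ Set.range ⇑f}
      = Nat.card B * Nat.card {z : K // c • z = 0} := by
    set φ : {x : {x : K // m • x = 0} // c • x.1 ∈ Set.range ⇑f} → B :=
      fun x => ⟨c • x.1.1, x.2, ⟨x.1.1, x.1.2, rfl⟩⟩ with hφ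
    rw [Nat.card_congr (Equiv.sigmaFiberEquiv φ).symm]
    apply natCard_sigma_const
    intro y
    have e1 : {x // φ x = y} ≃ {x : {x : K // m • x = 0} // c • x.1 = y.1} :=
      ⟨fun x => ⟨x.1.1, congrArg Subtype.val x.2⟩,
       fun x' => ⟨⟨x'.1, by rw [x'.2]; exact y.2.1⟩, Subtype.ext x'.2⟩,
       fun x => Subtype.ext (Subtype.ext rfl), fun x' => Subtype.ext rfl⟩
    rw [Nat.card_congr e1]
    exact translation_card hm y.1 y.2.2.choose y.2.2.choose_spec.1 y.2.2.choose_spec.2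
  rw [hfib, mul_comm, hBcard]

end Step

section StepCount

variable {H K : Type*} [AddCommGroup H] [AddCommGroup K]

lemma step_count {m c t : ℕ} (hm : m = 2 * c) (hc : c ≠ 0)
    (hL : ∀ j, j < m → j ≠ 0 → ∃ w, (w * j) % m = c) [Finite H] [Finite K]
    (hSP : ∀ h : H, 2 • h = 0 → ∃ h', m • h' = 0 ∧ h = c • h')
    (htor : Nat.card {h : H // 2 • h = 0} = t) :
    Nat.card {F : ZMod m × H →+ K // Injective ⇑F} =
      Nat.card {f : H →+ K // Injective ⇑f} *
        (Nat.card {x : K // m • x = 0} - Nat.card {x : K // c • x = 0} * t) := by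
  haveI : NeZero m := ⟨by omega⟩
  haveI : Finite (ZMod m × H →+ K) := Finite.of_injective _ DFunLike.coe_injective
  haveI : Finite (H →+ K) := Finite.of_injective _ DFunLike.coe_injective
  have e1 : {F : ZMod m × H →+ K // Injective ⇑F} ≃
      {p : (ZMod m →+ K) × (H →+ K) // Injective ⇑(p.1.coprod p.2)} := by
    refine Equiv.subtypeEquiv (homProdEquiv (ZMod m)) (fun F => ?_)
    have hFF := (homProdEquiv (ZMod m) (H := H) (K := K)).left_inv F
    conv_lhs => rw [← hFF]
    rfl
  have e2 : {p : (ZMod m →+ K) × (H →+ K) // Injective ⇑(p.1.coprod p.2)} ≃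
      {p : (ZMod m →+ K) × (H →+ K) // Injective ⇑p.2 ∧ c • p.1 1 ∉ Set.range ⇑p.2} :=
    Equiv.subtypeEquiv (Equiv.refl _) (fun p => injective_coprod_iff hm hc hL p.1 p.2)
  have e3 := subtypeProdSigma (α := ZMod m →+ K) (β := H →+ K)
    (fun f => Injective ⇑f) (fun f g => c • g 1 ∉ Set.range ⇑f)
  have e4 : ∀ f : {f : H →+ K // Injective ⇑f},
      {g : ZMod m →+ K // c • g 1 ∉ Set.range ⇑f.1} ≃
      {x : {x : K // m • x = 0} // c • x.1 ∉ Set.range ⇑f.1} :=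
    fun f => Equiv.subtypeEquiv (zmodHomEquiv m K) (fun g => Iff.rfl)
  rw [Nat.card_congr (((e1.trans e2).trans e3).trans (Equiv.sigmaCongrRight e4))]
  apply natCard_sigma_const
  intro f
  exact count_torsion_in_range hm f.1 f.2 hSP htor

end StepCount

section Model

abbrev Hmod (k1 k2 k3 : ℕ) : Type :=
  (Fin k1 → ZMod 8) × (Fin k2 → ZMod 4) × (Fin k3 → ZMod 2)

def consAddEquiv (M : Type*) [AddCommGroup M] (k : ℕ) :
    M × (Fin k → M) ≃+ (Fin (k+1) → M) :=
  AddEquiv.mk' ⟨fun p => Fin.cons p.1 p.2, fun f => (f 0, Fin.tail f),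
    fun p => by simp, fun f => by simp⟩
    (by
      rintro ⟨a, f⟩ ⟨b, g⟩
      funext i
      refine Fin.cases ?_ (fun j => ?_) i <;> simp)

def prodShuffle (M A B : Type*) [AddCommGroup M] [AddCommGroup A] [AddCommGroup B] :
    M × (A × B) ≃+ A × (M × B) :=
  ((AddEquiv.prodAssoc).symm.trans
    (AddEquiv.prodCongr AddEquiv.prodComm (AddEquiv.refl B))).trans AddEquiv.prodAssoc

def equivE3 (k1 k2 k3 : ℕ) : ZMod 2 × Hmod k1 k2 k3 ≃+ Hmod k1 k2 (k3+1) :=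
  ((prodShuffle _ _ _).trans
    (AddEquiv.prodCongr (AddEquiv.refl _) (prodShuffle _ _ _))).trans
    (AddEquiv.prodCongr (AddEquiv.refl _)
      (AddEquiv.prodCongr (AddEquiv.refl _) (consAddEquiv (ZMod 2) k3)))

def equivE2 (k1 k2 : ℕ) : ZMod 4 × Hmod k1 k2 0 ≃+ Hmod k1 (k2+1) 0 :=
  ((prodShuffle _ _ _).trans
    (AddEquiv.prodCongr (AddEquiv.refl _) (AddEquiv.prodAssoc).symm)).trans
    (AddEquiv.prodCongr (AddEquiv.refl _)
      (AddEquiv.prodCongr (consAddEquiv (ZMod 4) k2) (AddEquiv.refl _)))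

def equivE1 (k1 : ℕ) : ZMod 8 × Hmod k1 0 0 ≃+ Hmod (k1+1) 0 0 :=
  ((AddEquiv.prodAssoc).symm).trans
    (AddEquiv.prodCongr (consAddEquiv (ZMod 8) k1) (AddEquiv.refl _))

variable {K : Type*} [AddCommGroup K]

lemma inj_count_congr {H H' : Type*} [AddCommGroup H] [AddCommGroup H'] (e : H ≃+ H') :
    Nat.card {f : H' →+ K // Injective ⇑f} = Nat.card {f : H →+ K // Injective ⇑f} := by
  apply Nat.card_congr
  refine ⟨fun f => ⟨f.1.comp e.toAddMonoidHom, ?_⟩,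
    fun g => ⟨g.1.comp e.symm.toAddMonoidHom, ?_⟩, fun f => ?_, fun g => ?_⟩
  · exact f.2.comp e.injective
  · exact g.2.comp e.symm.injective
  · ext x; simp
  · ext x; simp

lemma base_count [Finite K] : Nat.card {f : Hmod 0 0 0 →+ K // Injective ⇑f} = 1 := by
  haveI : Subsingleton (Hmod 0 0 0) := by
    constructor
    rintro ⟨a, b, c⟩ ⟨a', b', c'⟩
    refine Prod.ext (Subsingleton.elim _ _) (Prod.ext (Subsingleton.elim _ _) (Subsingleton.elim _ _))
  rw [Nat.card_eq_one_iff_unique]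
  constructor
  · constructor
    rintro ⟨f, hf⟩ ⟨g, hg⟩
    apply Subtype.ext
    ext x
    rw [Subsingleton.elim x 0, map_zero, map_zero]
  · exact ⟨0, fun a b _ => Subsingleton.elim a b⟩

end Model

section Torsion

variable {A B M : Type*} [AddCommGroup A] [AddCommGroup B] [AddCommGroup M]

lemma torsion_pi (m k : ℕ) :
    Nat.card {x : Fin k → M // m • x = 0} = (Nat.card {x : M // m • x = 0}) ^ k := by
  have e : {x : Fin k → M // m • x = 0} ≃ (Fin k → {x : M // m • x = 0}) := by
    refine (Equiv.subtypeEquiv (Equiv.refl _) ?_).trans Equiv.subtypePiEquivPi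
    intro x
    simp [funext_iff]
  rw [Nat.card_congr e]
  simp [Nat.card_pi, Finset.prod_const]

lemma torsion_prod (m : ℕ) :
    Nat.card {x : A × B // m • x = 0}
      = Nat.card {a : A // m • a = 0} * Nat.card {b : B // m • b = 0} := by
  have e : {x : A × B // m • x = 0} ≃ {a : A // m • a = 0} × {b : B // m • b = 0} := by
    refine (Equiv.subtypeEquiv (Equiv.refl _) ?_).trans (Equiv.subtypeProdEquivProd)
    intro x
    rw [Prod.ext_iff]
    rfl
  rw [Nat.card_congr e, Nat.card_prod]

lemma torsion_one : Nat.card {x : M // 1 • x = 0} = 1 := by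
  rw [Nat.card_eq_one_iff_unique]
  constructor
  · exact ⟨fun a b => Subtype.ext (by rw [← one_nsmul a.1, a.2, ← one_nsmul b.1, b.2])⟩
  · exact ⟨0, smul_zero 1⟩

lemma t8z8 : Nat.card {x : ZMod 8 // 8 • x = 0} = 8 := by
  rw [Nat.card_eq_fintype_card]; decide

lemma t4z8 : Nat.card {x : ZMod 8 // 4 • x = 0} = 4 := by
  rw [Nat.card_eq_fintype_card]; decide

lemma t2z8 : Nat.card {x : ZMod 8 // 2 • x = 0} = 2 := by
  rw [Nat.card_eq_fintype_card]; decide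

lemma t8z4 : Nat.card {x : ZMod 4 // 8 • x = 0} = 4 := by
  rw [Nat.card_eq_fintype_card]; decide

lemma t4z4 : Nat.card {x : ZMod 4 // 4 • x = 0} = 4 := by
  rw [Nat.card_eq_fintype_card]; decide

lemma t2z4 : Nat.card {x : ZMod 4 // 2 • x = 0} = 2 := by
  rw [Nat.card_eq_fintype_card]; decide

lemma t8z2 : Nat.card {x : ZMod 2 // 8 • x = 0} = 2 := by
  rw [Nat.card_eq_fintype_card]; decide

lemma t4z2 : Nat.card {x : ZMod 2 // 4 • x = 0} = 2 := by
  rw [Nat.card_eq_fintype_card]; decide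

lemma t2z2 : Nat.card {x : ZMod 2 // 2 • x = 0} = 2 := by
  rw [Nat.card_eq_fintype_card]; decide

end Torsion

section SP

lemma sp8z8 : ∀ x : ZMod 8, 2 • x = 0 → ∃ y : ZMod 8, x = 4 • y := by decide
lemma sp4z8 : ∀ x : ZMod 8, 2 • x = 0 → ∃ y : ZMod 8, 4 • y = 0 ∧ x = 2 • y := by decide
lemma sp4z4 : ∀ x : ZMod 4, 2 • x = 0 → ∃ y : ZMod 4, 4 • y = 0 ∧ x = 2 • y := by decide
lemma all8 : ∀ x : ZMod 8, 8 • x = 0 := by decide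

lemma empty23_eq (x y : (Fin 0 → ZMod 4) × (Fin 0 → ZMod 2)) : x = y :=
  Prod.ext (funext fun i => i.elim0) (funext fun i => i.elim0)

lemma hSP2 (k1 k2 k3 : ℕ) :
    ∀ h : Hmod k1 k2 k3, 2 • h = 0 → ∃ h', 2 • h' = 0 ∧ h = 1 • h' :=
  fun h hh => ⟨h, hh, (one_nsmul h).symm⟩

lemma hSP8 (k1 : ℕ) :
    ∀ h : Hmod k1 0 0, 2 • h = 0 → ∃ h', 8 • h' = 0 ∧ h = 4 • h' := by
  rintro ⟨h1, hr⟩ hh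
  have hh1 : 2 • h1 = 0 := by simpa using congrArg Prod.fst hh
  choose y hy using fun i => sp8z8 (h1 i) (congrFun hh1 i)
  refine ⟨(y, 0, 0), ?_, ?_⟩
  · refine Prod.ext (funext fun i => all8 (y i)) ?_
    simp
  · refine Prod.ext (funext fun i => hy i) (empty23_eq _ _)

lemma hSP4 (k1 k2 : ℕ) :
    ∀ h : Hmod k1 k2 0, 2 • h = 0 → ∃ h', 4 • h' = 0 ∧ h = 2 • h' := by
  rintro ⟨h1, h2, h3⟩ hh
  have hh1 : 2 • h1 = 0 := by simpa using congrArg Prod.fst hh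
  have hh2 : 2 • h2 = 0 := by simpa using congrArg (fun p => p.2.1) hh
  choose y1 hy1 using fun i => sp4z8 (h1 i) (congrFun hh1 i)
  choose y2 hy2 using fun i => sp4z4 (h2 i) (congrFun hh2 i)
  refine ⟨(y1, y2, 0), ?_, ?_⟩
  · refine Prod.ext (funext fun i => (hy1 i).1) (Prod.ext (funext fun i => (hy2 i).1) ?_)
    simp
  · exact Prod.ext (funext fun i => (hy1 i).2)
      (Prod.ext (funext fun i => (hy2 i).2) (funext fun i => i.elim0))

lemma torsion_two_Hmod (k1 k2 k3 : ℕ) :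
    Nat.card {h : Hmod k1 k2 k3 // 2 • h = 0} = 2 ^ (k1 + k2 + k3) := by
  rw [torsion_prod, torsion_prod, torsion_pi, torsion_pi, torsion_pi, t2z8, t2z4, t2z2,
    pow_add, pow_add, mul_assoc]

end SP

section Master

lemma master_count (K : Type*) [AddCommGroup K] [Finite K] (k1 k2 k3 : ℕ) :
    Nat.card {f : Hmod k1 k2 k3 →+ K // Injective ⇑f} =
      (∏ i ∈ Finset.range k1,
        (Nat.card {x : K // 8 • x = 0} - Nat.card {x : K // 4 • x = 0} * 2 ^ i)) *
      (∏ j ∈ Finset.range k2,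
        (Nat.card {x : K // 4 • x = 0} - Nat.card {x : K // 2 • x = 0} * 2 ^ (k1 + j))) *
      (∏ l ∈ Finset.range k3,
        (Nat.card {x : K // 2 • x = 0} - 2 ^ (k1 + k2 + l))) := by
  induction k3 with
  | succ k ih =>
    rw [inj_count_congr (equivE3 k1 k2 k), step_count (m := 2) (c := 1) rfl one_ne_zero hL2
      (hSP2 k1 k2 k) (torsion_two_Hmod k1 k2 k), ih, torsion_one,
      Finset.prod_range_succ, one_mul, mul_assoc, mul_assoc]
  | zero =>
    simp only [Finset.range_zero, Finset.prod_empty, mul_one]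
    induction k2 with
    | succ k ih =>
      rw [inj_count_congr (equivE2 k1 k), step_count (m := 4) (c := 2) rfl two_ne_zero hL4
        (hSP4 k1 k) (torsion_two_Hmod k1 k 0), ih, Finset.prod_range_succ,
        Nat.add_zero, mul_assoc]
    | zero =>
      simp only [Finset.range_zero, Finset.prod_empty, mul_one]
      induction k1 with
      | succ k ih =>
        rw [inj_count_congr (equivE1 k), step_count (m := 8) (c := 4) rfl four_ne_zero hL8
          (hSP8 k) (torsion_two_Hmod k 0 0), ih, Finset.prod_range_succ]
        norm_num
      | zero =>
        rw [base_count]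
        simp

end Master

section Orbit

variable (G H : Type*) [AddCommGroup G] [AddCommGroup H] [Finite G] [Finite H]

noncomputable def fiber_equiv_aut (C : AddSubgroup G) (e₀ : C ≃+ H) :
    {f : {f : H →+ G // Injective ⇑f} // f.1.range = C} ≃ (H ≃+ H) := by
  haveI : Finite (H →+ G) := Finite.of_injective _ DFunLike.coe_injective
  refine Equiv.trans (β := H ≃+ C) ?_
    ⟨fun g => g.trans e₀, fun u => u.trans e₀.symm,
     fun g => by ext x; simp, fun u => by ext x; simp⟩
  refine ⟨fun f => ?_, fun e => ?_, ?_, ?_⟩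
  · refine AddEquiv.ofBijective
      (f.1.1.codRestrict C (fun x => by have h3 : f.1.1 x ∈ f.1.1.range := ⟨x, rfl⟩; rwa [f.2] at h3)) ⟨?_, ?_⟩
    · intro a b hab
      exact f.1.2 (congrArg Subtype.val hab)
    · rintro ⟨y, hy⟩
      rw [← f.2] at hy
      obtain ⟨x, hx⟩ := hy
      exact ⟨x, Subtype.ext hx⟩
  · refine ⟨⟨C.subtype.comp e.toAddMonoidHom, ?_⟩, ?_⟩
    · exact C.subtype_injective.comp e.injective
    · apply le_antisymm
      · rintro y ⟨x, rfl⟩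
        exact (e x).2
      · intro y hy
        exact ⟨e.symm ⟨y, hy⟩, by simp⟩
  · intro f
    apply Subtype.ext; apply Subtype.ext
    rfl
  · intro e
    apply AddEquiv.ext
    intro x
    apply Subtype.ext
    rfl

lemma orbit_count :
    Nat.card {C : AddSubgroup G // Nonempty (C ≃+ H)} * Nat.card (H ≃+ H)
      = Nat.card {f : H →+ G // Injective ⇑f} := by
  haveI : Finite (H →+ G) := Finite.of_injective _ DFunLike.coe_injective
  set Ψ : {f : H →+ G // Injective ⇑f} → {C : AddSubgroup G // Nonempty (C ≃+ H)} :=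
    fun f => ⟨f.1.range, ⟨(AddEquiv.ofBijective f.1.rangeRestrict
      ⟨fun a b hab => f.2 (congrArg Subtype.val hab), f.1.rangeRestrict_surjective⟩).symm⟩⟩
    with hΨ
  rw [Nat.card_congr (Equiv.sigmaFiberEquiv Ψ).symm]
  symm
  apply natCard_sigma_const
  rintro ⟨C, ⟨e₀⟩⟩
  refine Nat.card_congr (Equiv.trans ?_ (fiber_equiv_aut G H C e₀))
  refine Equiv.subtypeEquiv (Equiv.refl _) (fun f => ?_)
  constructor
  · intro hf
    have := congrArg Subtype.val hf
    simpa [hΨ] using this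
  · intro hf
    apply Subtype.ext
    simpa [hΨ] using hf

lemma aut_card_eq :
    Nat.card (H ≃+ H) = Nat.card {f : H →+ H // Injective ⇑f} := by
  apply Nat.card_congr
  refine ⟨fun e => ⟨e.toAddMonoidHom, e.injective⟩,
    fun f => AddEquiv.ofBijective f.1 ((Finite.injective_iff_bijective).mp f.2),
    fun e => by ext x; rfl, fun f => by apply Subtype.ext; ext x; rfl⟩

end Orbit

section TCards

lemma TG8 (n : ℕ) : Nat.card {x : Fin n → ZMod 8 // 8 • x = 0} = 2 ^ (3 * n) := by
  rw [torsion_pi, t8z8, show (8:ℕ) = 2^3 by norm_num, ← pow_mul]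

lemma TG4 (n : ℕ) : Nat.card {x : Fin n → ZMod 8 // 4 • x = 0} = 2 ^ (2 * n) := by
  rw [torsion_pi, t4z8, show (4:ℕ) = 2^2 by norm_num, ← pow_mul]

lemma TG2 (n : ℕ) : Nat.card {x : Fin n → ZMod 8 // 2 • x = 0} = 2 ^ n := by
  rw [torsion_pi, t2z8]

lemma TH8 (k1 k2 k3 : ℕ) :
    Nat.card {x : Hmod k1 k2 k3 // 8 • x = 0} = 2 ^ (3 * k1 + 2 * k2 + k3) := by
  rw [torsion_prod, torsion_prod, torsion_pi, torsion_pi, torsion_pi, t8z8, t8z4, t8z2,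
    show (8:ℕ) = 2^3 by norm_num, show (4:ℕ) = 2^2 by norm_num, ← pow_mul, ← pow_mul,
    ← pow_add, ← pow_add, Nat.add_assoc]

lemma TH4 (k1 k2 k3 : ℕ) :
    Nat.card {x : Hmod k1 k2 k3 // 4 • x = 0} = 2 ^ (2 * k1 + 2 * k2 + k3) := by
  rw [torsion_prod, torsion_prod, torsion_pi, torsion_pi, torsion_pi, t4z8, t4z4, t4z2,
    show (4:ℕ) = 2^2 by norm_num, ← pow_mul, ← pow_mul, ← pow_add, ← pow_add,
    Nat.add_assoc]

lemma TH2 (k1 k2 k3 : ℕ) :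
    Nat.card {x : Hmod k1 k2 k3 // 2 • x = 0} = 2 ^ (k1 + k2 + k3) :=
  torsion_two_Hmod k1 k2 k3

end TCards

lemma MGN_canonical (b k1 k2 k3 : ℕ) :
    MGN 1 b 1 k1 k2 k3 =
      (2^(b+k1+k2) *
        ((∏ i ∈ range k1, ((2:ℚ)^(3*b) - 2^(2*b+i))) *
         (∏ j ∈ range k2, ((2:ℚ)^(2*b) - 2^(b+k1+j))) *
         (∏ l ∈ range k3, ((2:ℚ)^b - 2^(k1+k2+l))))) /
      (2^((k1+k2+k3)+k1+k2) *
        ((∏ i ∈ range k1, ((2:ℚ)^(3*k1+2*k2+k3) - 2^(2*k1+2*k2+k3+i))) *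
         (∏ j ∈ range k2, ((2:ℚ)^(2*k1+2*k2+k3) - 2^(k1+k2+k3+k1+j))) *
         (∏ l ∈ range k3, ((2:ℚ)^(k1+k2+k3) - 2^(k1+k2+l))))) := by
  unfold MGN
  congr 1
  · rw [Finset.prod_range_one,
      Finset.prod_congr rfl (fun i (_ : i ∈ range k1) =>
        show ((8:ℚ) ^ b - 4 ^ b * 2 ^ i) * 2 ^ 1 = 2 * ((2:ℚ)^(3*b) - 2^(2*b+i)) by
          rw [show (8:ℚ)^b = 2^(3*b) by rw [pow_mul]; norm_num,
              show (4:ℚ)^b = 2^(2*b) by rw [pow_mul]; norm_num]; ring),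
      Finset.prod_congr rfl (fun j (_ : j ∈ range k2) =>
        show ((4:ℚ) ^ b - 2 ^ (b + k1 + j)) * 2 ^ 1 = 2 * ((2:ℚ)^(2*b) - 2^(b+k1+j)) by
          rw [show (4:ℚ)^b = 2^(2*b) by rw [pow_mul]; norm_num]; ring),
      Finset.prod_mul_distrib, Finset.prod_mul_distrib, Finset.prod_const, Finset.prod_const,
      Finset.card_range, Finset.card_range]
    ring
  · rw [Finset.prod_range_one,
      Finset.prod_congr rfl (fun i (_ : i ∈ range k1) =>
        show ((8:ℚ) ^ k1 - 4 ^ k1 * 2 ^ i) * 2 ^ (1 + 2*k2 + k3)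
            = 2 * ((2:ℚ)^(3*k1+2*k2+k3) - 2^(2*k1+2*k2+k3+i)) by
          rw [show (8:ℚ)^k1 = 2^(3*k1) by rw [pow_mul]; norm_num,
              show (4:ℚ)^k1 = 2^(2*k1) by rw [pow_mul]; norm_num]; ring),
      Finset.prod_congr rfl (fun j (_ : j ∈ range k2) =>
        show ((4:ℚ) ^ k2 - 2 ^ (k2 + j)) * 2 ^ (1 + 2*k1 + k3)
            = 2 * ((2:ℚ)^(2*k1+2*k2+k3) - 2^(k1+k2+k3+k1+j)) by
          rw [show (4:ℚ)^k2 = 2^(2*k2) by rw [pow_mul]; norm_num]; ring),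
      Finset.prod_mul_distrib, Finset.prod_mul_distrib, Finset.prod_const, Finset.prod_const,
      Finset.card_range, Finset.card_range]
    ring

lemma cast_fact {a b c : ℕ} (h : b + c ≤ a) :
    (((2^a - 2^b * 2^c : ℕ) : ℚ)) = 2^a - 2^(b+c) := by
  rw [← pow_add, Nat.cast_sub (Nat.pow_le_pow_right (by norm_num) h)]
  push_cast; ring

lemma cast_fact2 {a c : ℕ} (h : c ≤ a) :
    (((2^a - 2^c : ℕ) : ℚ)) = 2^a - 2^c := by
  rw [Nat.cast_sub (Nat.pow_le_pow_right (by norm_num) h)]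
  push_cast; ring


/-- The number of additive subgroups of `(ZMod 8)^n` isomorphic to
`(ZMod 8)^(k₁) × (ZMod 4)^(k₂) × (ZMod 2)^(k₃)`, multiplied by `2^r` where
`r = n - (k₁+k₂+k₃)`, equals `N(1,n;1,k₁,k₂,k₃)`. -/
theorem count_Z8_codes (n k₁ k₂ k₃ : ℕ) (h : k₁ + k₂ + k₃ ≤ n)
    (r : ℕ) (hr : r = n - (k₁ + k₂ + k₃)) :
    (Nat.card {C : AddSubgroup (Fin n → ZMod 8) //
        Nonempty (C ≃+
          ((Fin k₁ → ZMod 8) × (Fin k₂ → ZMod 4) × (Fin k₃ → ZMod 2)))} : ℚ) * 2 ^ r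
      = MGN 1 n 1 k₁ k₂ k₃ := by
  have hn : n = k₁ + k₂ + k₃ + r := by omega
  subst hn
  have key := orbit_count (Fin (k₁ + k₂ + k₃ + r) → ZMod 8) (Hmod k₁ k₂ k₃)
  rw [aut_card_eq, master_count, master_count, TG8, TG4, TG2, TH8, TH4, TH2] at key
  set N := k₁ + k₂ + k₃ + r with hN
  set cardSub := Nat.card {C : AddSubgroup (Fin N → ZMod 8) //
      Nonempty (C ≃+ ((Fin k₁ → ZMod 8) × (Fin k₂ → ZMod 4) × (Fin k₃ → ZMod 2)))} with hCS
  -- ℚ versions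
  set qFG : ℚ := (∏ i ∈ range k₁, ((2:ℚ)^(3*N) - 2^(2*N+i))) *
      (∏ j ∈ range k₂, ((2:ℚ)^(2*N) - 2^(N+k₁+j))) *
      (∏ l ∈ range k₃, ((2:ℚ)^N - 2^(k₁+k₂+l))) with hqFG
  set qFH : ℚ := (∏ i ∈ range k₁, ((2:ℚ)^(3*k₁+2*k₂+k₃) - 2^(2*k₁+2*k₂+k₃+i))) *
      (∏ j ∈ range k₂, ((2:ℚ)^(2*k₁+2*k₂+k₃) - 2^(k₁+k₂+k₃+k₁+j))) *
      (∏ l ∈ range k₃, ((2:ℚ)^(k₁+k₂+k₃) - 2^(k₁+k₂+l))) with hqFH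
  have hk1N : k₁ + k₂ + k₃ ≤ N := by omega
  have hFH : (((((∏ i ∈ range k₁, (2 ^ (3 * k₁ + 2 * k₂ + k₃) - 2 ^ (2 * k₁ + 2 * k₂ + k₃) * 2 ^ i)) *
          ∏ j ∈ range k₂, (2 ^ (2 * k₁ + 2 * k₂ + k₃) - 2 ^ (k₁ + k₂ + k₃) * 2 ^ (k₁ + j))) *
        ∏ l ∈ range k₃, (2 ^ (k₁ + k₂ + k₃) - 2 ^ (k₁ + k₂ + l))) : ℕ) : ℚ) = qFH := by
    rw [hqFH, Nat.cast_mul, Nat.cast_mul, Nat.cast_prod, Nat.cast_prod, Nat.cast_prod]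
    congr 1
    congr 1
    · refine Finset.prod_congr rfl (fun i hi => ?_)
      have hi' := Finset.mem_range.mp hi
      rw [cast_fact (by omega)]
    · refine Finset.prod_congr rfl (fun j hj => ?_)
      have hj' := Finset.mem_range.mp hj
      rw [cast_fact (by omega)]
      rw [show k₁ + k₂ + k₃ + (k₁ + j) = k₁ + k₂ + k₃ + k₁ + j by omega]
    · refine Finset.prod_congr rfl (fun l hl => ?_)
      have hl' := Finset.mem_range.mp hl
      rw [cast_fact2 (by omega)]
  have hFG : (((((∏ i ∈ range k₁, (2 ^ (3 * N) - 2 ^ (2 * N) * 2 ^ i)) *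
          ∏ j ∈ range k₂, (2 ^ (2 * N) - 2 ^ N * 2 ^ (k₁ + j))) *
        ∏ l ∈ range k₃, (2 ^ N - 2 ^ (k₁ + k₂ + l))) : ℕ) : ℚ) = qFG := by
    rw [hqFG, Nat.cast_mul, Nat.cast_mul, Nat.cast_prod, Nat.cast_prod, Nat.cast_prod]
    congr 1
    congr 1
    · refine Finset.prod_congr rfl (fun i hi => ?_)
      have hi' := Finset.mem_range.mp hi
      rw [cast_fact (by omega)]
    · refine Finset.prod_congr rfl (fun j hj => ?_)
      have hj' := Finset.mem_range.mp hj
      rw [cast_fact (by omega)]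
      rw [show N + (k₁ + j) = N + k₁ + j by omega]
    · refine Finset.prod_congr rfl (fun l hl => ?_)
      have hl' := Finset.mem_range.mp hl
      rw [cast_fact2 (by omega)]
  have keyQ : (cardSub : ℚ) * qFH = qFG := by
    rw [← hFH, ← hFG, ← Nat.cast_mul, key]
  have hqFH0 : qFH ≠ 0 := by
    have hpow : ∀ a b : ℕ, b < a → ((2:ℚ)^a - 2^b) ≠ 0 := fun a b hab =>
      sub_ne_zero_of_ne (ne_of_gt (pow_lt_pow_right₀ (by norm_num : (1:ℚ) < 2) hab))
    rw [hqFH]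
    refine mul_ne_zero (mul_ne_zero ?_ ?_) ?_
    · exact Finset.prod_ne_zero_iff.mpr (fun i hi =>
        hpow _ _ (by have := Finset.mem_range.mp hi; omega))
    · exact Finset.prod_ne_zero_iff.mpr (fun j hj =>
        hpow _ _ (by have := Finset.mem_range.mp hj; omega))
    · exact Finset.prod_ne_zero_iff.mpr (fun l hl =>
        hpow _ _ (by have := Finset.mem_range.mp hl; omega))
  rw [MGN_canonical]
  apply mul_right_cancel₀ hqFH0
  rw [show ((cardSub : ℚ) * 2^r) * qFH = ((cardSub : ℚ) * qFH) * 2^r by ring, keyQ]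
  rw [div_mul_eq_mul_div, eq_div_iff (by positivity)]
  rw [hqFG, hqFH, hN]
  ring
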